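/- arXiv:1411.6332 — 2 statements merged into one kernel-verified Lean document; each statement's English description precedes it below -/
import Mathlib

section
/- For any ε ∈ (0,1) there exists a positive constant C_ε such that |U^r(t,x) − λ^{−1}(x/t)| ≤ C_ε (1+t)^{−1+ε} for all t ≥ 1 and all x with λ₋ t ≤ x ≤ λ₊ t. -/
open Real MeasureTheory Filter Set

lemma my_tanh_le_one (y : ℝ) : Real.tanh y ≤ 1 := by
  have hc : (0:ℝ) < Real.cosh y := Real.cosh_pos y
  rw [Real.tanh_eq_sinh_div_cosh, div_le_one hc, Real.sinh_eq, Real.cosh_eq]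
  have := Real.exp_pos (-y)
  linarith

lemma my_neg_one_le_tanh (y : ℝ) : -1 ≤ Real.tanh y := by
  have hc : (0:ℝ) < Real.cosh y := Real.cosh_pos y
  rw [Real.tanh_eq_sinh_div_cosh, le_div_iff₀ hc, Real.sinh_eq, Real.cosh_eq]
  have := Real.exp_pos y
  linarith

lemma my_one_sub_tanh (y : ℝ) : 1 - Real.tanh y ≤ 2 * Real.exp (-(2*y)) := by
  have hc : (0:ℝ) < Real.cosh y := Real.cosh_pos y
  have key : 1 - Real.tanh y = Real.exp (-y) / Real.cosh y := by
    rw [Real.tanh_eq_sinh_div_cosh]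
    field_simp
    rw [Real.cosh_eq, Real.sinh_eq]; ring
  rw [key]
  have h2 : Real.exp y / 2 ≤ Real.cosh y := by
    rw [Real.cosh_eq]; have := Real.exp_pos (-y); linarith
  have h3 : Real.exp (-y) / Real.cosh y ≤ Real.exp (-y) / (Real.exp y / 2) :=
    div_le_div_of_nonneg_left (Real.exp_pos _).le (by positivity) h2
  refine h3.trans (le_of_eq ?_)
  rw [div_div_eq_mul_div,
    show Real.exp (-y) * 2 / Real.exp y = 2 * (Real.exp (-y) / Real.exp y) by ring,
    ← Real.exp_sub, show -y - y = -(2*y) by ring]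

lemma my_one_add_tanh (y : ℝ) : 1 + Real.tanh y ≤ 2 * Real.exp (2*y) := by
  have := my_one_sub_tanh (-y)
  rw [Real.tanh_neg] at this
  have e : -(2 * -y) = 2*y := by ring
  rw [e] at this
  linarith

/-- The smooth monotone initial datum `w₀(x) = (w₋+w₊)/2 + ((w₊−w₋)/2)·tanh x`. -/
noncomputable def w0 (wm wp x : ℝ) : ℝ := (wm + wp) / 2 + ((wp - wm) / 2) * Real.tanh x

set_option maxHeartbeats 1000000

theorem stmt_7 (um up : ℝ) (hu : um < up)
    (f : ℝ → ℝ) (hf : ContDiff ℝ 3 f)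
    (hconv : ∀ u ∈ Set.Icc um up, 0 < deriv (deriv f) u)
    (linv : ℝ → ℝ) (hlinv : ∀ u ∈ Set.Icc um up, linv (deriv f u) = u)
    (Y : ℝ → ℝ → ℝ)
    (hY : ∀ t x : ℝ, 0 ≤ t → Y t x + t * w0 (deriv f um) (deriv f up) (Y t x) = x) :
    let Ur : ℝ → ℝ → ℝ := fun t x => linv (w0 (deriv f um) (deriv f up) (Y t x))
    ∀ ε : ℝ, 0 < ε → ε < 1 → ∃ C : ℝ, 0 < C ∧ ∀ t : ℝ, 1 ≤ t → ∀ x : ℝ,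
      deriv f um * t ≤ x → x ≤ deriv f up * t →
      |Ur t x - linv (x / t)| ≤ C * (1 + t) ^ (-1 + ε) := by
  intro Ur ε hε hε1
  set lm := deriv f um with hlm_def
  set lp := deriv f up with hlp_def
  -- regularity
  have hf' : ContDiff ℝ 2 (deriv f) := by
    have h3 : ContDiff ℝ (2+1) f := by exact_mod_cast hf
    exact (contDiff_succ_iff_deriv.mp h3).2.2
  have hcont1 : Continuous (deriv f) := hf'.continuous
  have hcont2 : Continuous (deriv (deriv f)) := by
    have h2 : ContDiff ℝ (1+1) (deriv f) := by exact_mod_cast hf'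
    exact ((contDiff_succ_iff_deriv.mp h2).2.2).continuous
  have hdiffble : DifferentiableOn ℝ (deriv f) (interior (Icc um up)) :=
    (hf'.differentiable (by norm_num)).differentiableOn
  have hmono : StrictMonoOn (deriv f) (Icc um up) :=
    strictMonoOn_of_deriv_pos (convex_Icc um up) hcont1.continuousOn
      (fun x hx => hconv x (interior_subset hx))
  have hlt : lm < lp := hmono (left_mem_Icc.2 hu.le) (right_mem_Icc.2 hu.le) hu
  obtain ⟨u0, hu0, hmin⟩ := isCompact_Icc.exists_isMinOn (nonempty_Icc.2 hu.le)
    hcont2.continuousOn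
  set m := deriv (deriv f) u0 with hm_def
  have hm : 0 < m := hconv u0 hu0
  have hMVT : ∀ a ∈ Icc um up, ∀ b ∈ Icc um up, a ≤ b → m*(b-a) ≤ deriv f b - deriv f a :=
    fun a ha b hb hab => Convex.mul_sub_le_image_sub_of_le_deriv (convex_Icc um up)
      hcont1.continuousOn hdiffble (fun x hx => hmin (interior_subset hx)) a ha b hb hab
  have hsurj : ∀ s ∈ Icc lm lp, ∃ u ∈ Icc um up, deriv f u = s := by
    intro s hs
    exact intermediate_value_Icc hu.le hcont1.continuousOn hs
  have hlip : ∀ a ∈ Icc lm lp, ∀ b ∈ Icc lm lp, |linv a - linv b| ≤ |a - b| / m := by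
    intro a ha b hb
    obtain ⟨ua, hua, rfl⟩ := hsurj a ha
    obtain ⟨ub, hub, rfl⟩ := hsurj b hb
    rw [hlinv ua hua, hlinv ub hub, le_div_iff₀ hm]
    rcases le_total ua ub with h | h
    · have h1 := hMVT ua hua ub hub h
      have h2 : deriv f ua ≤ deriv f ub := by nlinarith
      rw [abs_of_nonpos (by linarith), abs_of_nonpos (by linarith)]
      nlinarith
    · have h1 := hMVT ub hub ua hua h
      have h2 : deriv f ub ≤ deriv f ua := by nlinarith
      rw [abs_of_nonneg (by linarith), abs_of_nonneg (by linarith)]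
      nlinarith
  set K := lp - lm with hK_def
  have hK : 0 < K := sub_pos.2 hlt
  set A : ℝ := 1 + |Real.log K| / 2 with hA_def
  have hA : 0 < A := by
    have := abs_nonneg (Real.log K); rw [hA_def]; linarith
  refine ⟨2*(A + 1/ε)/m, by positivity, ?_⟩
  intro t ht x hx1 hx2
  have ht0 : (0:ℝ) < t := lt_of_lt_of_le one_pos ht
  have hYx : Y t x + t * w0 lm lp (Y t x) = x := hY t x ht0.le
  set y := Y t x with hy_def
  set W := w0 lm lp y with hW_def
  have htanh1 := my_tanh_le_one y
  have htanh2 := my_neg_one_le_tanh y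
  have hWeq : W = (lm + lp)/2 + (K/2) * Real.tanh y := by
    rw [hW_def, w0, hK_def]
  have hW1 : lm ≤ W := by nlinarith
  have hW2 : W ≤ lp := by nlinarith
  have hxt1 : lm ≤ x/t := (le_div_iff₀ ht0).2 (by linarith)
  have hxt2 : x/t ≤ lp := (div_le_iff₀ ht0).2 (by linarith)
  have hdiff : |W - x/t| = |y| / t := by
    have h : W - x/t = -(y/t) := by
      field_simp
      linarith
    rw [h, abs_neg, abs_div, abs_of_pos ht0]
  -- bound on |y|
  have hexp1 := Real.exp_pos (2*y)
  have hexp2 := Real.exp_pos (-(2*y))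
  have hee : Real.exp (-(2*y)) * Real.exp (2*y) = 1 := by
    rw [← Real.exp_add]; simp
  have hYb : |y| * Real.exp (2*|y|) ≤ K * t := by
    rcases le_total 0 y with hy0 | hy0
    · rw [abs_of_nonneg hy0]
      have hlpW : lp - W = (K/2) * (1 - Real.tanh y) := by rw [hWeq, hK_def]; ring
      have h3 := my_one_sub_tanh y
      have h1 : y ≤ t * ((K/2) * (1 - Real.tanh y)) := by
        calc y = x - t*W := by linarith
          _ ≤ lp*t - t*W := by linarith
          _ = t * (lp - W) := by ring
          _ = t * ((K/2) * (1 - Real.tanh y)) := by rw [hlpW]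
      have h2 : t * ((K/2) * (1 - Real.tanh y)) ≤ t * ((K/2) * (2 * Real.exp (-(2*y)))) := by
        apply mul_le_mul_of_nonneg_left _ ht0.le
        exact mul_le_mul_of_nonneg_left h3 (by positivity)
      have h4 : y ≤ t * K * Real.exp (-(2*y)) := by
        calc y ≤ t * ((K/2) * (2 * Real.exp (-(2*y)))) := h1.trans h2
          _ = t * K * Real.exp (-(2*y)) := by ring
      have h6 := mul_le_mul_of_nonneg_right h4 hexp1.le
      calc y * Real.exp (2*y) ≤ t * K * Real.exp (-(2*y)) * Real.exp (2*y) := h6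
        _ = t * K * (Real.exp (-(2*y)) * Real.exp (2*y)) := by ring
        _ = K * t := by rw [hee]; ring
    · rw [abs_of_nonpos hy0]
      have hWlm : W - lm = (K/2) * (1 + Real.tanh y) := by rw [hWeq, hK_def]; ring
      have h3 := my_one_add_tanh y
      have h1 : -y ≤ t * ((K/2) * (1 + Real.tanh y)) := by
        calc -y = t*W - x := by linarith
          _ ≤ t*W - lm*t := by linarith
          _ = t * (W - lm) := by ring
          _ = t * ((K/2) * (1 + Real.tanh y)) := by rw [hWlm]
      have h2 : t * ((K/2) * (1 + Real.tanh y)) ≤ t * ((K/2) * (2 * Real.exp (2*y))) := by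
        apply mul_le_mul_of_nonneg_left _ ht0.le
        exact mul_le_mul_of_nonneg_left h3 (by positivity)
      have h4 : -y ≤ t * K * Real.exp (2*y) := by
        calc -y ≤ t * ((K/2) * (2 * Real.exp (2*y))) := h1.trans h2
          _ = t * K * Real.exp (2*y) := by ring
      have h6 := mul_le_mul_of_nonneg_right h4 hexp2.le
      calc -y * Real.exp (2 * -y) = -y * Real.exp (-(2*y)) := by rw [show 2 * -y = -(2*y) by ring]
        _ ≤ t * K * Real.exp (2*y) * Real.exp (-(2*y)) := h6
        _ = t * K * (Real.exp (-(2*y)) * Real.exp (2*y)) := by ring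
        _ = K * t := by rw [hee]; ring
  have hlogt : 0 ≤ Real.log t := Real.log_nonneg ht
  have hYb2 : |y| ≤ A + Real.log t / 2 := by
    rcases le_total |y| 1 with h | h
    · have := abs_nonneg (Real.log K); rw [hA_def]; linarith
    · have h1 : Real.exp (2*|y|) ≤ K * t := by nlinarith [Real.exp_pos (2*|y|)]
      have h2 : 2*|y| ≤ Real.log (K*t) := (Real.le_log_iff_exp_le (by positivity)).2 h1
      rw [Real.log_mul hK.ne' ht0.ne'] at h2
      have h3 : Real.log K ≤ |Real.log K| := le_abs_self _
      rw [hA_def]; linarith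
  have hmain : |Ur t x - linv (x/t)| ≤ (A + Real.log t / 2) / (m * t) := by
    have hl := hlip W ⟨hW1, hW2⟩ (x/t) ⟨hxt1, hxt2⟩
    have hUr : Ur t x = linv W := rfl
    rw [hUr]
    calc |linv W - linv (x/t)| ≤ |W - x/t| / m := hl
      _ = |y| / (t * m) := by rw [hdiff, div_div]
      _ ≤ (A + Real.log t / 2) / (t * m) := by gcongr
      _ = (A + Real.log t / 2) / (m * t) := by rw [mul_comm]
  have htε : (1:ℝ) ≤ t ^ ε := by
    calc (1:ℝ) = 1 ^ ε := (Real.one_rpow ε).symm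
      _ ≤ t ^ ε := Real.rpow_le_rpow (by norm_num) ht hε.le
  have hlog_le : Real.log t ≤ t ^ ε / ε := Real.log_le_rpow_div ht0.le hε
  clear_value A
  have hnum : A + Real.log t / 2 ≤ (A + 1/ε) * t ^ ε := by
    have h1 : A ≤ A * t ^ ε := le_mul_of_one_le_right hA.le htε
    have h2 : Real.log t / 2 ≤ (1/ε) * t ^ ε := by
      have h2b : 0 ≤ t ^ ε / ε := by positivity
      calc Real.log t / 2 ≤ t ^ ε / ε / 2 := by linarith
        _ ≤ t ^ ε / ε := by linarith
        _ = (1/ε) * t ^ ε := by ring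
    linarith
  have hpow : (1/2) * (t ^ ε / t) ≤ (1+t) ^ (-1+ε) := by
    have e1 : t ^ ε / t = t ^ (-1+ε) := by
      rw [Real.rpow_add ht0, Real.rpow_neg_one]
      ring
    rw [e1]
    have h6 : (1/2:ℝ) ≤ 2 ^ (-1+ε:ℝ) := by
      have e2 : (1/2:ℝ) = 2 ^ (-1:ℝ) := by rw [Real.rpow_neg_one]; norm_num
      rw [e2]
      exact Real.rpow_le_rpow_of_exponent_le one_le_two (by linarith)
    calc (1/2) * t ^ (-1+ε) ≤ 2 ^ (-1+ε) * t ^ (-1+ε) :=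
          mul_le_mul_of_nonneg_right h6 (Real.rpow_nonneg ht0.le _)
      _ = (2*t) ^ (-1+ε) := (Real.mul_rpow (by norm_num) ht0.le).symm
      _ ≤ (1+t) ^ (-1+ε) := Real.rpow_le_rpow_of_nonpos (by linarith) (by linarith) (by linarith)
  calc |Ur t x - linv (x/t)| ≤ (A + Real.log t / 2) / (m * t) := hmain
    _ ≤ ((A + 1/ε) * t ^ ε) / (m * t) := by gcongr
    _ = (2*(A + 1/ε)/m) * ((1/2) * (t ^ ε / t)) := by field_simp
    _ ≤ (2*(A + 1/ε)/m) * ((1+t) ^ (-1+ε)) := by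
        apply mul_le_mul_of_nonneg_left hpow
        positivity
end

section
/- Let q satisfy 1 ≤ q < (p−1)/(p−2) if p > 2, or 1 ≤ q < ∞ if 1 < p ≤ 2. Then there exists a positive constant C (depending only on p, q, A, B) such that ‖∂_x² U(t,·)‖_{L^q(ℝ)} = C·t^{−(2q−1)/((p+1)q)} for all t > 0, where ∂_x² U(t,·) denotes the second spatial derivative, defined for all x with |x| ≠ √(A/B)·t^{1/(p+1)} (hence almost everywhere). Moreover, if 1 < p ≤ 2, there exists a positive constant C′ (depending only on p, A, B) such that the essential supremum of |∂_x² U(t,·)| equals C′·t^{−2/(p+1)} for all t > 0. -/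
open Real MeasureTheory Filter Set
open scoped ENNReal NNReal

/-- The Barenblatt-type profile `v(t,x) = t^{-1/(p+1)} (max(A - B(x t^{-1/(p+1)})², 0))^{1/(p-1)}`,
the spatial derivative of the contact wave for `p`-Laplacian type viscosity. -/
noncomputable def vfun (p A B t x : ℝ) : ℝ :=
  t ^ (-(1:ℝ)/(p+1)) * (max (A - B * (x * t ^ (-(1:ℝ)/(p+1)))^2) 0) ^ ((1:ℝ)/(p-1))

/-- The contact wave for `p`-Laplacian type viscosity,
`U(t,x) = u₋ + ∫_{-∞}^x t^{-1/(p+1)} (max(A - B(y t^{-1/(p+1)})², 0))^{1/(p-1)} dy`. -/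
noncomputable def Ucw (p A B um t x : ℝ) : ℝ :=
  um + ∫ y in Set.Iio x, vfun p A B t y

noncomputable def g0 (p A B : ℝ) (y : ℝ) : ℝ := (max (A - B * y^2) 0) ^ ((1:ℝ)/(p-1))

lemma deriv_comp_mul_right' (f : ℝ → ℝ) {s : ℝ} (hs : s ≠ 0) (x : ℝ) :
    deriv (fun y => f (y * s)) x = s * deriv f (x * s) := by
  have h1 : HasDerivAt (fun y : ℝ => y * s) s x := by
    simpa using (hasDerivAt_id x).mul_const s
  by_cases hd : DifferentiableAt ℝ f (x * s)
  · have h2 : HasDerivAt (fun y => f (y * s)) (deriv f (x * s) * s) x :=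
      hd.hasDerivAt.comp x h1
    rw [h2.deriv]; ring
  · rw [deriv_zero_of_not_differentiableAt hd, deriv_zero_of_not_differentiableAt, mul_zero]
    intro hc
    apply hd
    have h2 : DifferentiableAt ℝ (fun z : ℝ => z * s⁻¹) (x * s) :=
      differentiableAt_id.mul_const _
    have hx : (x * s) * s⁻¹ = x := by field_simp
    have hc' : DifferentiableAt ℝ (fun y => f (y * s)) ((x * s) * s⁻¹) := by rw [hx]; exact hc
    have h3 := DifferentiableAt.comp (x * s) hc' h2
    have he : ((fun y => f (y * s)) ∘ fun z : ℝ => z * s⁻¹) = f := by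
      funext z; simp [Function.comp, mul_assoc, inv_mul_cancel₀ hs]
    rwa [he] at h3

lemma deriv_g0_out {p A B : ℝ} (hp : p ≠ 1) {y : ℝ} (hy : A - B * y^2 < 0) :
    deriv (g0 p A B) y = 0 := by
  have hc : Continuous fun z : ℝ => A - B * z^2 := by continuity
  have hev : ∀ᶠ z in nhds y, A - B * z^2 < 0 :=
    hc.continuousAt.eventually_lt continuousAt_const hy
  have hev2 : g0 p A B =ᶠ[nhds y] fun _ => 0 := by
    filter_upwards [hev] with z hz
    simp only [g0, max_eq_right hz.le]
    exact Real.zero_rpow (one_div_ne_zero (sub_ne_zero.mpr hp))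
  rw [hev2.deriv_eq, deriv_const]

lemma deriv_g0_in {p A B : ℝ} {y : ℝ} (hy : 0 < A - B * y^2) :
    deriv (g0 p A B) y
      = (1/(p-1)) * (A - B * y^2) ^ ((1:ℝ)/(p-1) - 1) * (-(2*B*y)) := by
  have hc : Continuous fun z : ℝ => A - B * z^2 := by continuity
  have hev : ∀ᶠ z in nhds y, 0 < A - B * z^2 :=
    continuousAt_const.eventually_lt hc.continuousAt hy
  have hev2 : g0 p A B =ᶠ[nhds y] fun z => (A - B * z^2) ^ ((1:ℝ)/(p-1)) := by
    filter_upwards [hev] with z hz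
    simp only [g0, max_eq_left hz.le]
  have hinner : HasDerivAt (fun z : ℝ => A - B * z^2) (-(2*B*y)) y := by
    have h1 : HasDerivAt (fun z : ℝ => z^2) (2*y) y := by
      simpa using hasDerivAt_pow 2 y
    have := (h1.const_mul B).const_sub A
    rw [show -(2*B*y) = -(B*(2*y)) by ring]; exact this
  have houter : HasDerivAt (fun x : ℝ => x ^ ((1:ℝ)/(p-1)))
      ((1/(p-1)) * (A - B * y^2) ^ ((1:ℝ)/(p-1) - 1)) (A - B * y^2) :=
    Real.hasDerivAt_rpow_const (Or.inl hy.ne')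
  have hcomp : HasDerivAt (fun z : ℝ => (A - B * z^2) ^ ((1:ℝ)/(p-1)))
      ((1/(p-1)) * (A - B * y^2) ^ ((1:ℝ)/(p-1) - 1) * (-(2*B*y))) y := by
    have := houter.comp y hinner; exact this
  rw [hev2.deriv_eq, hcomp.deriv]

lemma eLpNorm_scaled (h : ℝ → ℝ) (hm : Measurable h) {s : ℝ} (hs : 0 < s) (qq : ℝ≥0∞) :
    eLpNorm (fun x => s^2 * h (x * s)) qq volume
      = ENNReal.ofReal (s^2) *
        ((ENNReal.ofReal s⁻¹) ^ (1/qq).toReal * eLpNorm h qq volume) := by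
  have h1 : (fun x => s^2 * h (x * s)) = (s^2 : ℝ) • (fun x => h (x * s)) := rfl
  rw [h1, eLpNorm_const_smul, Real.enorm_eq_ofReal (sq_nonneg s)]
  congr 1
  have h2 : eLpNorm (fun x => h (x * s)) qq volume
      = eLpNorm h qq (Measure.map (· * s) volume) := by
    have := eLpNorm_map_measure (μ := volume) (p := qq) (g := h) (f := (· * s))
      hm.aestronglyMeasurable (measurable_mul_const s).aemeasurable
    exact this.symm
  rw [h2, Real.map_volume_mul_right hs.ne',
    eLpNorm_smul_measure_of_ne_zero (c := ENNReal.ofReal |s⁻¹|)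
      (by simp [abs_of_pos (inv_pos.mpr hs), ENNReal.ofReal_eq_zero, not_le, inv_pos, hs]),
    abs_of_pos (inv_pos.mpr hs), smul_eq_mul]

set_option maxHeartbeats 1000000 in
theorem stmt_12 (p μ um up A B q : ℝ)
    (hp : 1 < p) (hμ : 0 < μ) (hu : um < up)
    (hB : B = (p - 1) / (2 * μ * p * (p + 1))) (hA : 0 < A)
    (hnorm : 2 * A ^ ((p+1)/(2*(p-1))) * B ^ (-(1:ℝ)/2) *
      (∫ θ in (0:ℝ)..(Real.pi/2), Real.sin θ ^ ((p+1)/(p-1))) = up - um)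
    (hq1 : 1 ≤ q) (hq2 : 2 < p → q < (p - 1) / (p - 2)) :
    (∃ C : ℝ, 0 < C ∧ ∀ t : ℝ, 0 < t →
      eLpNorm (fun x => deriv (fun y => vfun p A B t y) x) (ENNReal.ofReal q) volume
        = ENNReal.ofReal (C * t ^ (-(2 * q - 1) / ((p + 1) * q)))) ∧
    (p ≤ 2 → ∃ C' : ℝ, 0 < C' ∧ ∀ t : ℝ, 0 < t →
      eLpNorm (fun x => deriv (fun y => vfun p A B t y) x) ⊤ volume
        = ENNReal.ofReal (C' * t ^ (-(2:ℝ) / (p + 1)))) := by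
  clear hnorm hu
  have hp1 : (0:ℝ) < p - 1 := by linarith
  have hq0 : (0:ℝ) < q := lt_of_lt_of_le one_pos hq1
  have hB0 : 0 < B := by
    rw [hB]
    have h1 : (0:ℝ) < 2 * μ * p * (p+1) := by nlinarith [mul_pos hμ (mul_pos (by linarith : (0:ℝ) < p) (by linarith : (0:ℝ) < p + 1))]
    exact div_pos hp1 h1
  clear hB
  set m : ℝ := 1/(p-1) with hm
  have hm0 : 0 < m := by rw [hm]; positivity
  set r : ℝ := Real.sqrt (A/B) with hrdef
  have hr0 : 0 < r := Real.sqrt_pos.mpr (div_pos hA hB0)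
  have hr2 : B * r^2 = A := by
    rw [hrdef, Real.sq_sqrt (div_pos hA hB0).le]
    field_simp
  set h : ℝ → ℝ := deriv (g0 p A B) with hh
  have hmeas : Measurable h := measurable_deriv _
  have hin : ∀ y : ℝ, |y| < r → 0 < A - B * y^2 := by
    intro y hy
    have h1 : y^2 < r^2 := by
      rw [← sq_abs y]
      exact pow_lt_pow_left₀ hy (abs_nonneg y) two_ne_zero
    nlinarith
  have hout : ∀ y : ℝ, r < |y| → A - B * y^2 < 0 := by
    intro y hy
    have h1 : r^2 < y^2 := by
      rw [← sq_abs y]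
      exact pow_lt_pow_left₀ hy hr0.le two_ne_zero
    nlinarith
  have hformula : ∀ y : ℝ, |y| < r → h y = m * (A - B * y^2) ^ (m - 1) * (-(2*B*y)) := by
    intro y hy
    rw [hh, hm]
    exact deriv_g0_in (hin y hy)
  have hzero : ∀ y : ℝ, r < |y| → h y = 0 := by
    intro y hy
    rw [hh]
    exact deriv_g0_out hp.ne' (hout y hy)
  have haer : ∀ᵐ y : ℝ, |y| ≠ r := by
    rw [ae_iff]
    have hsub : {y : ℝ | ¬ |y| ≠ r} ⊆ {r, -r} := by
      intro y hy
      simp only [mem_setOf_eq, not_not] at hy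
      rcases (abs_eq hr0.le).mp hy with h1 | h1 <;> simp [h1]
    exact measure_mono_null hsub ((Set.toFinite ({r, -r} : Set ℝ)).measure_zero volume)
  -- pointwise bound
  have habs : ∀ y : ℝ, |y| < r → |h y| = m * (A - B*y^2)^(m-1) * (2*B*|y|) := by
    intro y hy
    rw [hformula y hy, abs_mul, abs_mul, abs_of_pos hm0,
      abs_of_nonneg (Real.rpow_nonneg (hin y hy).le _), abs_neg, abs_mul, abs_mul,
      abs_of_nonneg (by norm_num : (0:ℝ) ≤ 2), abs_of_pos hB0]
  set K : ℝ := m * (2*B*r) * ((B*r)^(m-1) + (2*B*r)^(m-1)) with hK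
  have hBr : (0:ℝ) < B * r := mul_pos hB0 hr0
  have h2Br : (0:ℝ) < 2*B*r := by linarith
  have hKpos : 0 < K := by
    have h1 := Real.rpow_pos_of_pos hBr (m-1)
    have h2 := Real.rpow_pos_of_pos h2Br (m-1)
    rw [hK]
    have := mul_pos hm0 h2Br
    nlinarith
  have hbound : ∀ y : ℝ, |y| < r → |h y| ≤ K * (r - |y|)^(m-1) := by
    intro y hy
    have hpos := hin y hy
    have hry : (0:ℝ) < r - |y| := by linarith
    have hlow : B*r*(r-|y|) ≤ A - B*y^2 := by
      nlinarith [abs_nonneg y, sq_abs y, mul_nonneg (mul_nonneg hB0.le (abs_nonneg y)) hry.le]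
    have hhigh : A - B*y^2 ≤ 2*B*r*(r-|y|) := by
      nlinarith [sq_abs y, mul_nonneg hB0.le (sq_nonneg (r - |y|))]
    have hfac : (A - B*y^2)^(m-1) ≤ ((B*r)^(m-1) + (2*B*r)^(m-1)) * (r-|y|)^(m-1) := by
      have hryn : (0:ℝ) ≤ (r-|y|)^(m-1) := Real.rpow_nonneg hry.le _
      rcases le_or_gt 0 (m-1) with hcase | hcase
      · have h1 : (A - B*y^2)^(m-1) ≤ (2*B*r*(r-|y|))^(m-1) :=
          Real.rpow_le_rpow hpos.le hhigh hcase
        rw [Real.mul_rpow h2Br.le hry.le] at h1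
        have h2 : (0:ℝ) ≤ (B*r)^(m-1) := Real.rpow_nonneg hBr.le _
        nlinarith
      · have h1 : (A - B*y^2)^(m-1) ≤ (B*r*(r-|y|))^(m-1) :=
          Real.rpow_le_rpow_of_nonpos (mul_pos hBr hry) hlow hcase.le
        rw [Real.mul_rpow hBr.le hry.le] at h1
        have h2 : (0:ℝ) ≤ (2*B*r)^(m-1) := Real.rpow_nonneg h2Br.le _
        nlinarith
    calc |h y| = m * (A - B*y^2)^(m-1) * (2*B*|y|) := habs y hy
      _ ≤ m * (((B*r)^(m-1) + (2*B*r)^(m-1)) * (r-|y|)^(m-1)) * (2*B*r) := by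
          have ha2 : 2*B*|y| ≤ 2*B*r := by nlinarith [abs_nonneg y]
          have ha3 : (0:ℝ) ≤ 2*B*|y| := by nlinarith [abs_nonneg y]
          have hryn : (0:ℝ) ≤ (r-|y|)^(m-1) := Real.rpow_nonneg hry.le _
          have h2 : (0:ℝ) ≤ (B*r)^(m-1) := Real.rpow_nonneg hBr.le _
          have h3 : (0:ℝ) ≤ (2*B*r)^(m-1) := Real.rpow_nonneg h2Br.le _
          exact mul_le_mul (mul_le_mul_of_nonneg_left hfac hm0.le) ha2 ha3
            (mul_nonneg hm0.le (mul_nonneg (by linarith) hryn))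
      _ = K * (r - |y|)^(m-1) := by rw [hK]; ring
  have hne0 : ¬ (h =ᵐ[volume] (0 : ℝ → ℝ)) := by
    intro h0
    have hsub : Ioo (0:ℝ) r ⊆ {y : ℝ | ¬ h y = (0:ℝ → ℝ) y} := by
      intro y hy
      have hy1 : |y| < r := by rw [abs_of_pos hy.1]; exact hy.2
      have hP : 0 < (A - B*y^2)^(m-1) := Real.rpow_pos_of_pos (hin y hy1) _
      have h2 : 0 < m * ((A - B*y^2)^(m-1)) * (2*B*y) :=
        mul_pos (mul_pos hm0 hP) (by nlinarith [hy.1])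
      simp only [mem_setOf_eq, Pi.zero_apply, hformula y hy1]
      intro hcon
      nlinarith [h2]
    have hvol := measure_mono_null hsub (ae_iff.mp h0)
    rw [Real.volume_Ioo] at hvol
    simp only [ENNReal.ofReal_eq_zero] at hvol
    linarith
  have haes : AEStronglyMeasurable h volume := hmeas.aestronglyMeasurable
  constructor
  · -- Lq part
    have hqe0 : (ENNReal.ofReal q) ≠ 0 := (ENNReal.ofReal_pos.mpr hq0).ne'
    have hβ : (-1:ℝ) < (m-1)*q := by
      rcases le_or_gt p 2 with hple | hpgt
      · have hm1 : 1 ≤ m := by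
          rw [hm, le_div_iff₀ hp1]; linarith
        nlinarith
      · have hq2' := hq2 hpgt
        have hp2 : (0:ℝ) < p - 2 := by linarith
        have h1 : q * (p-2) < p - 1 := (lt_div_iff₀ hp2).mp hq2'
        have hmm : m * (p - 1) = 1 := by rw [hm]; field_simp
        have key : ((m-1)*q + 1) * (p-1) = (2-p)*q + (p-1) := by linear_combination q * hmm
        have key2 : 0 < ((m-1)*q + 1) * (p-1) := by rw [key]; nlinarith
        nlinarith [key2]
    have hIntOn : IntegrableOn (fun y : ℝ => (r - |y|) ^ ((m-1)*q)) (Ioo (-r) r) volume := by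
      have h1 : IntervalIntegrable (fun x : ℝ => x ^ ((m-1)*q)) volume r 0 :=
        intervalIntegral.intervalIntegrable_rpow' hβ
      have h2 : IntervalIntegrable (fun x : ℝ => (r - x) ^ ((m-1)*q)) volume 0 r := by
        simpa using h1.comp_sub_left r
      have h3 : IntegrableOn (fun x : ℝ => (r - x) ^ ((m-1)*q)) (Ioc 0 r) volume := by
        have := (intervalIntegrable_iff).mp h2
        rwa [uIoc_of_le hr0.le] at this
      have h4 : IntervalIntegrable (fun x : ℝ => (r + x) ^ ((m-1)*q)) volume 0 (-r) := by
        have := (IntervalIntegrable.iff_comp_neg).mp h2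
        simpa [sub_neg_eq_add] using this
      have h5 : IntegrableOn (fun x : ℝ => (r + x) ^ ((m-1)*q)) (Ioc (-r) 0) volume := by
        have := (intervalIntegrable_iff).mp h4
        rwa [uIoc_comm, uIoc_of_le (by linarith : -r ≤ (0:ℝ))] at this
      have h3' : IntegrableOn (fun y : ℝ => (r - |y|) ^ ((m-1)*q)) (Ioc 0 r) volume :=
        h3.congr_fun (fun y hy => by simp [abs_of_pos hy.1]) measurableSet_Ioc
      have h5' : IntegrableOn (fun y : ℝ => (r - |y|) ^ ((m-1)*q)) (Ioc (-r) 0) volume :=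
        h5.congr_fun (fun y hy => by simp [abs_of_nonpos hy.2, sub_neg_eq_add]) measurableSet_Ioc
      refine (h5'.union h3').mono_set ?_
      intro y hy
      rcases le_or_gt y 0 with hc | hc
      · exact Or.inl ⟨hy.1, hc⟩
      · exact Or.inr ⟨hc, hy.2.le⟩
    have hIK : IntegrableOn (fun y : ℝ => K^q * (r - |y|) ^ ((m-1)*q)) (Ioo (-r) r) volume :=
      hIntOn.const_mul _
    have hlin : ∫⁻ y in Ioo (-r) r, ENNReal.ofReal (K^q * (r - |y|) ^ ((m-1)*q)) < ⊤ := by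
      have h0 : (0:ℝ → ℝ) ≤ᵐ[volume.restrict (Ioo (-r) r)]
          fun y : ℝ => K^q * (r - |y|)^((m-1)*q) := by
        rw [EventuallyLE, ae_restrict_iff' measurableSet_Ioo]
        refine Eventually.of_forall fun y hy => ?_
        have h1 : (0:ℝ) ≤ r - |y| := by
          have := abs_lt.mpr (⟨hy.1, hy.2⟩ : -r < y ∧ y < r)
          linarith
        have h2 := Real.rpow_nonneg h1 ((m-1)*q)
        have h3 := Real.rpow_nonneg hKpos.le q
        simp only [Pi.zero_apply]
        exact mul_nonneg h3 h2
      exact (hasFiniteIntegral_iff_ofReal h0).mp hIK.hasFiniteIntegral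
    have hJ : ∫⁻ y : ℝ, (‖h y‖₊ : ℝ≥0∞) ^ q < ⊤ := by
      have hle : ∀ᵐ y : ℝ, (‖h y‖₊ : ℝ≥0∞) ^ q ≤
          (Ioo (-r) r).indicator (fun y => ENNReal.ofReal (K^q * (r - |y|) ^ ((m-1)*q))) y := by
        filter_upwards [haer] with y hy
        rcases lt_or_gt_of_ne hy with hlt | hgt
        · have hy' : y ∈ Ioo (-r) r := by
            rcases abs_lt.mp hlt with ⟨ha, hb⟩; exact ⟨ha, hb⟩
          rw [indicator_of_mem hy']
          have hrn : (0:ℝ) ≤ r - |y| := by linarith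
          rw [← enorm_eq_nnnorm, Real.enorm_eq_ofReal_abs, ENNReal.ofReal_rpow_of_nonneg (abs_nonneg _) hq0.le]
          apply ENNReal.ofReal_le_ofReal
          calc |h y|^q ≤ (K * (r - |y|)^(m-1))^q :=
              Real.rpow_le_rpow (abs_nonneg _) (hbound y hlt) hq0.le
            _ = K^q * ((r - |y|)^(m-1))^q :=
              Real.mul_rpow hKpos.le (Real.rpow_nonneg hrn _)
            _ = K^q * (r - |y|)^((m-1)*q) := by rw [← Real.rpow_mul hrn]
        · rw [hzero y hgt]
          simp [ENNReal.zero_rpow_of_pos hq0]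
      calc ∫⁻ y : ℝ, (‖h y‖₊ : ℝ≥0∞) ^ q
          ≤ ∫⁻ y : ℝ, (Ioo (-r) r).indicator
              (fun y => ENNReal.ofReal (K^q * (r - |y|) ^ ((m-1)*q))) y :=
            lintegral_mono_ae hle
        _ = ∫⁻ y in Ioo (-r) r, ENNReal.ofReal (K^q * (r - |y|) ^ ((m-1)*q)) :=
            lintegral_indicator measurableSet_Ioo _
        _ < ⊤ := hlin
    have hNform : eLpNorm h (ENNReal.ofReal q) volume
        = (∫⁻ y : ℝ, (‖h y‖₊ : ℝ≥0∞) ^ q) ^ (1/q) := by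
      simp only [← enorm_eq_nnnorm]
      rw [eLpNorm_eq_lintegral_rpow_enorm_toReal hqe0 ENNReal.ofReal_ne_top,
        ENNReal.toReal_ofReal hq0.le]
    have hfin : eLpNorm h (ENNReal.ofReal q) volume ≠ ⊤ := by
      rw [hNform]
      exact (ENNReal.rpow_lt_top_of_nonneg (by positivity) hJ.ne).ne
    have hposN : eLpNorm h (ENNReal.ofReal q) volume ≠ 0 := by
      rw [Ne, eLpNorm_eq_zero_iff haes hqe0]
      exact hne0
    refine ⟨(eLpNorm h (ENNReal.ofReal q) volume).toReal,
      ENNReal.toReal_pos hposN hfin, ?_⟩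
    intro t ht
    set s : ℝ := t ^ (-(1:ℝ)/(p+1)) with hsdef
    have hs0 : 0 < s := Real.rpow_pos_of_pos ht _
    have hrw : (fun x => deriv (fun y => vfun p A B t y) x) = fun x => s^2 * h (x * s) := by
      funext x
      have hveq : (fun y => vfun p A B t y) = fun y => s * g0 p A B (y * s) := by
        funext y; rw [hsdef]; rfl
      rw [hveq, deriv_const_mul_field, deriv_comp_mul_right' (g0 p A B) hs0.ne' x, ← hh]
      ring
    rw [hrw, eLpNorm_scaled h hmeas hs0 _]
    have hexp : (1/(ENNReal.ofReal q)).toReal = q⁻¹ := by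
      rw [one_div, ENNReal.toReal_inv, ENNReal.toReal_ofReal hq0.le]
    have hC : eLpNorm h (ENNReal.ofReal q) volume
        = ENNReal.ofReal ((eLpNorm h (ENNReal.ofReal q) volume).toReal) :=
      (ENNReal.ofReal_toReal hfin).symm
    conv_lhs => rw [hexp, hC, ENNReal.ofReal_rpow_of_pos (inv_pos.mpr hs0),
      ← ENNReal.ofReal_mul (Real.rpow_nonneg (inv_pos.mpr hs0).le _),
      ← ENNReal.ofReal_mul (sq_nonneg s)]
    congr 1
    have e1 : s ^ 2 = t ^ (-(2:ℝ)/(p+1)) := by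
      rw [hsdef, ← Real.rpow_natCast (t ^ (-(1:ℝ)/(p+1))) 2, ← Real.rpow_mul ht.le]
      congr 1; push_cast; ring
    have e2 : (s⁻¹) ^ q⁻¹ = t ^ ((1/(p+1)) * q⁻¹) := by
      have hinv : s⁻¹ = t ^ ((1:ℝ)/(p+1)) := by
        rw [hsdef, ← Real.rpow_neg ht.le]; congr 1; ring
      rw [hinv, ← Real.rpow_mul ht.le]
    calc s ^ 2 * (s⁻¹ ^ q⁻¹ * (eLpNorm h (ENNReal.ofReal q) volume).toReal)
        = t ^ (-(2:ℝ)/(p+1)) * t ^ ((1/(p+1)) * q⁻¹)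
            * (eLpNorm h (ENNReal.ofReal q) volume).toReal := by rw [e1, e2]; ring
      _ = t ^ ((-(2:ℝ)/(p+1)) + (1/(p+1)) * q⁻¹)
            * (eLpNorm h (ENNReal.ofReal q) volume).toReal := by rw [← Real.rpow_add ht]
      _ = (eLpNorm h (ENNReal.ofReal q) volume).toReal * t ^ (-(2*q-1)/((p+1)*q)) := by
          rw [mul_comm]
          congr 2
          have hpp : p + 1 ≠ 0 := by positivity
          have hqq : q ≠ 0 := hq0.ne'
          field_simp
          ring
  · intro hple
    have hm1 : (1:ℝ) ≤ m := by rw [hm, le_div_iff₀ hp1]; linarith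
    set M' : ℝ := m * A^(m-1) * (2*B*r) with hM'
    have hM'pos : 0 < M' := by
      have hh1 := Real.rpow_pos_of_pos hA (m-1)
      rw [hM']
      exact mul_pos (mul_pos hm0 hh1) h2Br
    have hbd : ∀ᵐ y : ℝ, ‖h y‖ ≤ M' := by
      filter_upwards [haer] with y hy
      rw [Real.norm_eq_abs]
      rcases lt_or_gt_of_ne hy with hlt | hgt
      · have hup : (A - B*y^2)^(m-1) ≤ A^(m-1) :=
          Real.rpow_le_rpow (hin y hlt).le (by nlinarith [sq_nonneg y]) (by linarith)
        have hb2 : 2*B*|y| ≤ 2*B*r := by nlinarith [abs_nonneg y]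
        have ha3 : (0:ℝ) ≤ 2*B*|y| := by nlinarith [abs_nonneg y]
        rw [habs y hlt, hM']
        exact mul_le_mul (mul_le_mul_of_nonneg_left hup hm0.le) hb2 ha3
          (mul_nonneg hm0.le (Real.rpow_nonneg hA.le _))
      · rw [hzero y hgt]
        simpa using hM'pos.le
    have hfin : eLpNorm h ⊤ volume ≠ ⊤ := by
      rw [eLpNorm_exponent_top]
      exact (eLpNormEssSup_lt_top_of_ae_bound hbd).ne
    have hposN : eLpNorm h ⊤ volume ≠ 0 := by
      rw [Ne, eLpNorm_eq_zero_iff haes (by simp : (⊤:ℝ≥0∞) ≠ 0)]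
      exact hne0
    refine ⟨(eLpNorm h ⊤ volume).toReal, ENNReal.toReal_pos hposN hfin, ?_⟩
    intro t ht
    set s : ℝ := t ^ (-(1:ℝ)/(p+1)) with hsdef
    have hs0 : 0 < s := Real.rpow_pos_of_pos ht _
    have hrw : (fun x => deriv (fun y => vfun p A B t y) x) = fun x => s^2 * h (x * s) := by
      funext x
      have hveq : (fun y => vfun p A B t y) = fun y => s * g0 p A B (y * s) := by
        funext y; rw [hsdef]; rfl
      rw [hveq, deriv_const_mul_field, deriv_comp_mul_right' (g0 p A B) hs0.ne' x, ← hh]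
      ring
    rw [hrw, eLpNorm_scaled h hmeas hs0 ⊤]
    have hexp : (1/(⊤:ℝ≥0∞)).toReal = 0 := by simp
    rw [hexp, ENNReal.rpow_zero, one_mul]
    have hC : eLpNorm h ⊤ volume = ENNReal.ofReal ((eLpNorm h ⊤ volume).toReal) :=
      (ENNReal.ofReal_toReal hfin).symm
    conv_lhs => rw [hC, ← ENNReal.ofReal_mul (sq_nonneg s)]
    congr 1
    have e1 : s ^ 2 = t ^ (-(2:ℝ)/(p+1)) := by
      rw [hsdef, ← Real.rpow_natCast (t ^ (-(1:ℝ)/(p+1))) 2, ← Real.rpow_mul ht.le]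
      congr 1; push_cast; ring
    rw [e1]
    ring
end
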